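/- Fix v ∈ R^k, data x_1,…,x_n ∈ R^d and labels y_1,…,y_n ∈ R. If a matrix W̃ ∈ R^{k×d} satisfies (1/n) Σ_{i=1}^n (x_i^T W̃^T diag(v) W̃ x_i − y_i) x_i x_i^T = 0 (the zero d×d matrix), then W̃ is a global minimizer of L, i.e., L(W) ≥ L(W̃) for every W ∈ R^{k×d}. -/

import Mathlib

open MeasureTheory ProbabilityTheory Matrix Real

noncomputable section

/-- Euclidean norm of a vector. -/
def euclNorm {n : Type*} [Fintype n] (x : n → ℝ) : ℝ :=
  Real.sqrt (∑ i, x i ^ 2)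

/-- Maximum singular value (operator norm) of a matrix. -/
def sigmaMax {m n : Type*} [Fintype m] [Fintype n] (A : Matrix m n ℝ) : ℝ :=
  sSup ((fun x => euclNorm (A.mulVec x)) '' {x : n → ℝ | euclNorm x = 1})

/-- Minimum singular value of a matrix. -/
def sigmaMin {m n : Type*} [Fintype m] [Fintype n] (A : Matrix m n ℝ) : ℝ :=
  sInf ((fun x => euclNorm (A.mulVec x)) '' {x : n → ℝ | euclNorm x = 1})

/-- Frobenius norm of a matrix. -/
def frobNorm {m n : Type*} [Fintype m] [Fintype n] (A : Matrix m n ℝ) : ℝ :=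
  Real.sqrt (∑ i, ∑ j, A i j ^ 2)

/-- Nuclear norm of a matrix: the trace of `sqrt (Aᵀ A)`, i.e. the sum of singular values. -/
def nuclearNorm {m n : Type*} [Fintype m] [Fintype n] [DecidableEq n]
    (A : Matrix m n ℝ) : ℝ :=
  ((Matrix.posSemidef_conjTranspose_mul_self A).1.eigenvectorUnitary.1 *
    Matrix.diagonal (Real.sqrt ∘ (Matrix.posSemidef_conjTranspose_mul_self A).1.eigenvalues) *
    (star (Matrix.posSemidef_conjTranspose_mul_self A).1.eigenvectorUnitary : Matrix n n ℝ)).trace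

/-- Khatri-Rao product: columnwise Kronecker product. -/
def khatriRao {m n p : Type*} (A : Matrix m p ℝ) (B : Matrix n p ℝ) : Matrix (m × n) p ℝ :=
  Matrix.of fun ij l => A ij.1 l * B ij.2 l

/-- Standard Gaussian measure `N(0, I_d)` on `ℝ^d`. -/
def stdGaussian (d : ℕ) : Measure (Fin d → ℝ) :=
  Measure.pi fun _ => gaussianReal 0 1

attribute [local instance] Matrix.frobeniusNormedAddCommGroup Matrix.frobeniusNormedSpace

/-- if the weighted sum of outer products `(1/n) Σ_i r_i x_i x_iᵀ` vanishes at `W̃`,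
then `W̃` is a global minimizer of the quadratic-activation loss. -/
theorem stmt5 (d k n : ℕ) (hn : 0 < n)
    (v : Fin k → ℝ) (x : Fin n → Fin d → ℝ) (y : Fin n → ℝ)
    (L : Matrix (Fin k) (Fin d) ℝ → ℝ)
    (hL : ∀ W : Matrix (Fin k) (Fin d) ℝ,
      L W = (1 / (2 * (n : ℝ))) *
        ∑ i, (x i ⬝ᵥ (Wᵀ * Matrix.diagonal v * W).mulVec (x i) - y i) ^ 2)
    (Wt : Matrix (Fin k) (Fin d) ℝ)
    (hstat : (1 / (n : ℝ)) •
        ∑ i, (x i ⬝ᵥ (Wtᵀ * Matrix.diagonal v * Wt).mulVec (x i) - y i) •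
          Matrix.vecMulVec (x i) (x i) = (0 : Matrix (Fin d) (Fin d) ℝ)) :
    ∀ W : Matrix (Fin k) (Fin d) ℝ, L Wt ≤ L W := by
  intro W
  set D := Matrix.diagonal v with hD
  set r : Fin n → ℝ := fun i => x i ⬝ᵥ (Wtᵀ * D * Wt).mulVec (x i) - y i with hr
  have hnne : (n : ℝ) ≠ 0 := Nat.cast_ne_zero.mpr hn.ne'
  have hS : ∑ i, r i • Matrix.vecMulVec (x i) (x i) = 0 := by
    rcases smul_eq_zero.mp hstat with h | h
    · exact absurd h (by simp [hnne])
    · exact h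
  have key : ∀ a b : Fin d, ∑ i, r i * (x i a * x i b) = 0 := by
    intro a b
    have := congrFun (congrFun hS a) b
    simpa [Matrix.vecMulVec, Finset.sum_apply, Matrix.sum_apply] using this
  set A := Wᵀ * D * W - Wtᵀ * D * Wt with hA
  set δ : Fin n → ℝ := fun i => x i ⬝ᵥ A.mulVec (x i) with hδ
  have hdec : ∀ i, x i ⬝ᵥ (Wᵀ * D * W).mulVec (x i) - y i = r i + δ i := by
    intro i
    simp only [hδ, hA, hr, Matrix.sub_mulVec, dotProduct_sub]
    ring
  have hδexp : ∀ i, δ i = ∑ a, ∑ b, A a b * (x i a * x i b) := by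
    intro i
    simp only [hδ, dotProduct, Matrix.mulVec, Finset.mul_sum]
    exact Finset.sum_congr rfl fun a _ => Finset.sum_congr rfl fun b _ => by ring
  have hcross : ∑ i, r i * δ i = 0 := by
    calc ∑ i, r i * δ i = ∑ a, ∑ b, A a b * ∑ i, r i * (x i a * x i b) := by
          simp only [hδexp, Finset.mul_sum]
          rw [Finset.sum_comm]
          refine Finset.sum_congr rfl fun a _ => ?_
          rw [Finset.sum_comm]
          refine Finset.sum_congr rfl fun b _ => ?_
          exact Finset.sum_congr rfl fun i _ => by ring

      _ = 0 := by simp [key]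
  have hc : (0:ℝ) < 1 / (2 * (n:ℝ)) := by positivity
  rw [hL W, hL Wt]
  have : ∑ i, (x i ⬝ᵥ (Wᵀ * D * W).mulVec (x i) - y i) ^ 2
      = ∑ i, r i ^ 2 + (2 * ∑ i, r i * δ i + ∑ i, δ i ^ 2) := by
    simp only [hdec]
    rw [Finset.mul_sum, ← Finset.sum_add_distrib, ← Finset.sum_add_distrib]
    exact Finset.sum_congr rfl fun i _ => by ring
  rw [this, hcross]
  have h2 : (0:ℝ) ≤ ∑ i, δ i ^ 2 := Finset.sum_nonneg fun i _ => sq_nonneg _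
  nlinarith [Finset.sum_nonneg (fun i (_ : i ∈ Finset.univ) => sq_nonneg (r i))]
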